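/- With F defined by F(x) = Σ_{i=0}^{∞} x_i · 4^{Σ_{j=0}^{i−1} x_j} · (Σ_{j=i}^{∞} (1 − x_j)/2^j)^2 using the finite binary expansion of x for dyadic rationals, one has F(x) < 4/9 for all x ∈ (0,1). -/

import Mathlib

/-- The `i`-th binary digit of `x ∈ [0,1]` (with `digit x 0` the units digit),
using the finite (terminating) expansion at dyadic rationals. -/
noncomputable def digit (x : ℝ) (i : ℕ) : ℕ := (⌊2 ^ i * x⌋).toNat % 2

/-- The tail sum `Σ_{j=i}^{∞} (1 - x_j)/2^j`. -/
noncomputable def tail (x : ℝ) (i : ℕ) : ℝ :=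
  ∑' j : ℕ, (1 - (digit x (i + j) : ℝ)) / 2 ^ (i + j)

/-- The function `F` from the cellular automaton `T_a`. -/
noncomputable def F (x : ℝ) : ℝ :=
  ∑' i : ℕ, (digit x i : ℝ) * 4 ^ (∑ j ∈ Finset.range i, digit x j) * (tail x i) ^ 2

namespace FProof

lemma digit_le_one (x : ℝ) (i : ℕ) : digit x i ≤ 1 := by
  unfold digit; omega

lemma one_sub_digit_nonneg (x : ℝ) (i : ℕ) : (0:ℝ) ≤ 1 - (digit x i : ℝ) := by
  have h : ((digit x i : ℕ) : ℝ) ≤ 1 := by exact_mod_cast digit_le_one x i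
  linarith

lemma term_nonneg (x : ℝ) (i j : ℕ) :
    (0:ℝ) ≤ (1 - (digit x (i + j) : ℝ)) / 2 ^ (i + j) :=
  div_nonneg (one_sub_digit_nonneg x _) (by positivity)

lemma term_le (x : ℝ) (i j : ℕ) :
    (1 - (digit x (i + j) : ℝ)) / 2 ^ (i + j) ≤ (1/2:ℝ) ^ (i + j) := by
  have hd : (0:ℝ) ≤ (digit x (i+j) : ℝ) := by positivity
  have h2 : (0:ℝ) < 2 ^ (i+j) := by positivity
  rw [div_le_iff₀ h2, one_div, inv_pow, inv_mul_cancel₀ (ne_of_gt h2)]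
  linarith

lemma summable_tail (x : ℝ) (i : ℕ) :
    Summable (fun j : ℕ => (1 - (digit x (i + j) : ℝ)) / 2 ^ (i + j)) := by
  apply Summable.of_nonneg_of_le (term_nonneg x i) (fun j => (term_le x i j).trans ?_)
    summable_geometric_two
  exact pow_le_pow_of_le_one (by norm_num) (by norm_num) (by omega)

lemma tail_nonneg (x : ℝ) (i : ℕ) : 0 ≤ tail x i :=
  tsum_nonneg (term_nonneg x i)

lemma tail_one_le_one (x : ℝ) : tail x 1 ≤ 1 := by
  have hs : Summable (fun j : ℕ => (1/2:ℝ) ^ (1 + j)) := by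
    have := summable_geometric_two.mul_left (1/2:ℝ)
    refine this.congr fun j => ?_
    rw [pow_add, pow_one]
  have h := Summable.tsum_le_tsum (term_le x 1) (summable_tail x 1) hs
  calc tail x 1 ≤ ∑' j : ℕ, (1/2:ℝ) ^ (1 + j) := h
    _ = (1/2) * ∑' j : ℕ, (1/2:ℝ) ^ j := by
        rw [← tsum_mul_left]; exact tsum_congr fun j => by rw [pow_add, pow_one]
    _ = 1 := by rw [tsum_geometric_two]; norm_num

lemma digit_zero {x : ℝ} (hx : x ∈ Set.Ico (0:ℝ) 1) : digit x 0 = 0 := by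
  unfold digit
  rw [pow_zero, one_mul, Int.floor_eq_zero_iff.2 (by exact ⟨hx.1, hx.2⟩)]
  rfl

/-- shift of digits: for `i ≥ 1`, `digit x (i+1) = digit (Int.fract (2x)) i`. -/
lemma digit_shift {x : ℝ} (hx : 0 ≤ x) {i : ℕ} (hi : 1 ≤ i) :
    digit x (i + 1) = digit (Int.fract (2 * x)) i := by
  have hfr : Int.fract (2*x) = 2*x - ⌊2*x⌋ := rfl
  have key : (2:ℝ) ^ (i+1) * x = 2 ^ i * Int.fract (2 * x) + ((2^i * ⌊2*x⌋ : ℤ) : ℝ) := by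
    rw [hfr]; push_cast; ring
  unfold digit
  rw [key, Int.floor_add_intCast]
  have h1 : 0 ≤ ⌊2 ^ i * Int.fract (2 * x)⌋ :=
    Int.floor_nonneg.2 (mul_nonneg (by positivity) (Int.fract_nonneg _))
  have h2 : 0 ≤ ⌊(2:ℝ)*x⌋ := Int.floor_nonneg.2 (by linarith)
  have h3 : (0:ℤ) ≤ 2^i * ⌊(2:ℝ)*x⌋ := mul_nonneg (by positivity) h2
  rw [Int.toNat_add h1 h3]
  have h4 : ((2:ℤ)^i * ⌊(2:ℝ)*x⌋).toNat % 2 = 0 := by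
    rcases Nat.exists_eq_add_of_le hi with ⟨k, rfl⟩
    have : (2:ℤ)^(1+k) * ⌊(2:ℝ)*x⌋ = 2 * (2^k * ⌊(2:ℝ)*x⌋) := by ring
    rw [this]
    omega
  omega

/-- shift of tails: for `i ≥ 1`, `tail x (i+1) = tail (Int.fract (2x)) i / 2`. -/
lemma tail_shift {x : ℝ} (hx : 0 ≤ x) {i : ℕ} (hi : 1 ≤ i) :
    tail x (i + 1) = tail (Int.fract (2 * x)) i / 2 := by
  unfold tail
  rw [← tsum_div_const]
  refine tsum_congr fun j => ?_
  rw [show i + 1 + j = (i + j) + 1 from by omega,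
    digit_shift hx (by omega : 1 ≤ i + j), pow_succ]
  ring

/-- splitting off the head of a tail sum. -/
lemma tail_split (x : ℝ) (i : ℕ) :
    tail x i = (1 - (digit x i : ℝ)) / 2 ^ i + tail x (i + 1) := by
  unfold tail
  rw [Summable.tsum_eq_zero_add (summable_tail x i), Nat.add_zero]
  congr 1
  exact tsum_congr fun j => by rw [show i + (j+1) = i + 1 + j from by omega]

lemma fract_mem {x : ℝ} (hx : x ∈ Set.Ico (0:ℝ) 1) :
    Int.fract (2 * x) ∈ Set.Ico (0:ℝ) 1 :=
  ⟨Int.fract_nonneg _, Int.fract_lt_one _⟩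

/-- the relation between `tail x 1` and `tail y 1` where `y = fract (2x)`. -/
lemma tail_one_rec {x : ℝ} (hx : x ∈ Set.Ico (0:ℝ) 1) :
    tail x 1 = (1 - (digit x 1 : ℝ)) / 2 + tail (Int.fract (2*x)) 1 / 2 := by
  rw [tail_split x 1, tail_shift hx.1 le_rfl]
  norm_num

/-- partial sums of `F`. -/
noncomputable def P (n : ℕ) (x : ℝ) : ℝ :=
  ∑ i ∈ Finset.range n,
    (digit x i : ℝ) * 4 ^ (∑ j ∈ Finset.range i, digit x j) * (tail x i) ^ 2

lemma P_succ (n : ℕ) (x : ℝ) :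
    P (n+1) x = P n x
      + (digit x n : ℝ) * 4 ^ (∑ j ∈ Finset.range n, digit x j) * (tail x n) ^ 2 := by
  unfold P; rw [Finset.sum_range_succ]

lemma sum_digit_shift {x : ℝ} (hx : x ∈ Set.Ico (0:ℝ) 1) {i : ℕ} (hi : 1 ≤ i) :
    ∑ j ∈ Finset.range (i+1), digit x j
      = digit x 1 + ∑ j ∈ Finset.range i, digit (Int.fract (2*x)) j := by
  induction i, hi using Nat.le_induction with
  | base =>
    rw [Finset.sum_range_succ, Finset.sum_range_one, Finset.sum_range_one,
      digit_zero hx, digit_zero (fract_mem hx)]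
    omega
  | succ i hi ih =>
    rw [Finset.sum_range_succ, ih, Finset.sum_range_succ, digit_shift hx.1 hi]
    ring

lemma term_shift {x : ℝ} (hx : x ∈ Set.Ico (0:ℝ) 1) {i : ℕ} (hi : 1 ≤ i) :
    (digit x (i+1) : ℝ) * 4 ^ (∑ j ∈ Finset.range (i+1), digit x j) * (tail x (i+1)) ^ 2
      = (4:ℝ) ^ (digit x 1) / 4 *
        ((digit (Int.fract (2*x)) i : ℝ)
          * 4 ^ (∑ j ∈ Finset.range i, digit (Int.fract (2*x)) j)
          * (tail (Int.fract (2*x)) i) ^ 2) := by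
  rw [digit_shift hx.1 hi, sum_digit_shift hx hi, tail_shift hx.1 hi, pow_add]
  ring

lemma P_rec {x : ℝ} (hx : x ∈ Set.Ico (0:ℝ) 1) (n : ℕ) :
    P (n+2) x = (digit x 1 : ℝ) * (tail x 1)^2
      + (4:ℝ) ^ (digit x 1) / 4 * P (n+1) (Int.fract (2*x)) := by
  induction n with
  | zero =>
    unfold P
    rw [Finset.sum_range_succ, Finset.sum_range_one, Finset.sum_range_one,
      Finset.sum_range_one, digit_zero hx, digit_zero (fract_mem hx)]
    norm_num
  | succ n ih =>
    rw [show n + 1 + 2 = (n + 2) + 1 from rfl, P_succ (n+2) x, ih,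
      show n + 2 = (n + 1) + 1 from rfl, term_shift hx (by omega : 1 ≤ n + 1),
      P_succ (n+1) (Int.fract (2*x))]
    ring

lemma P_le : ∀ n : ℕ, ∀ x ∈ Set.Ico (0:ℝ) 1, P n x ≤ (1 - (tail x 1)^2) / 3 := by
  intro n
  induction n using Nat.strong_induction_on with
  | _ n ih =>
    match n with
    | 0 =>
      intro x hx
      have h0 := tail_nonneg x 1
      have h1 := tail_one_le_one x
      unfold P
      simp only [Finset.range_zero, Finset.sum_empty]
      nlinarith
    | 1 =>
      intro x hx
      have h0 := tail_nonneg x 1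
      have h1 := tail_one_le_one x
      unfold P
      rw [Finset.sum_range_one, digit_zero hx]
      push_cast
      nlinarith
    | (n+2) =>
      intro x hx
      have hy := fract_mem hx
      have ihy := ih (n+1) (by omega) _ hy
      have ht := tail_one_rec hx
      have hty0 := tail_nonneg (Int.fract (2*x)) 1
      have hty1 := tail_one_le_one (Int.fract (2*x))
      rw [P_rec hx n, ht]
      rcases (by have := digit_le_one x 1; omega : digit x 1 = 0 ∨ digit x 1 = 1) with h | h <;>
        rw [h] <;> push_cast <;> nlinarith

end FProof

theorem F_lt_four_ninths : ∀ x ∈ Set.Ioo (0 : ℝ) 1, F x < 4 / 9 := by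
  intro x hx
  have hx' : x ∈ Set.Ico (0:ℝ) 1 := ⟨hx.1.le, hx.2⟩
  have hle : F x ≤ (1 - (tail x 1)^2) / 3 := by
    apply Real.tsum_le_of_sum_range_le
    · intro i
      have := FProof.tail_nonneg x i
      positivity
    · intro n
      exact FProof.P_le n x hx'
  nlinarith [FProof.tail_nonneg x 1, sq_nonneg (tail x 1)]
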